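/- Let κ ∈ ℝ, n > 0 a real number, and c ∈ ℂ. Define F(z) := c · Γ(1-κ, 4πn y) · e^{-2πi n z} for z = x+iy ∈ ℍ, where Γ(s,w) is the upper incomplete gamma function. Then ξ_κ(F)(z) = -(4πn)^{1-κ} · conj(c) · e^{2πi n z}, where ξ_κ F := 2i y^κ · conjugate(∂F/∂z̄). -/

import Mathlib

open Real Complex Set Topology

noncomputable section

/-- The upper incomplete gamma function `Γ(s, w) = ∫_w^∞ e^{-t} t^{s-1} dt`. -/
def upperIncompleteGamma (s w : ℝ) : ℝ :=
  ∫ t in Ioi w, Real.exp (-t) * t ^ (s - 1)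

/-- Partial derivative in the real (`x`) direction. -/
def pdx (F : ℂ → ℂ) (z : ℂ) : ℂ := fderiv ℝ F z 1

/-- Partial derivative in the imaginary (`y`) direction. -/
def pdy (F : ℂ → ℂ) (z : ℂ) : ℂ := fderiv ℝ F z Complex.I

/-- Wirtinger derivative `∂/∂z̄`. -/
def wdzbar (F : ℂ → ℂ) (z : ℂ) : ℂ := (pdx F z + Complex.I * pdy F z) / 2

/-- The operator `ξ_κ F := 2i y^κ ⋅ conj(∂F/∂z̄)`. -/
def xiOp (κ : ℝ) (F : ℂ → ℂ) (z : ℂ) : ℂ :=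
  2 * Complex.I * ((z.im ^ κ : ℝ) : ℂ) * (starRingEnd ℂ) (wdzbar F z)

end

open MeasureTheory in
lemma uig_contOn (s : ℝ) :
    ContinuousOn (fun t : ℝ => Real.exp (-t) * t ^ (s - 1)) (Ioi 0) := by
  refine continuousOn_id.neg.rexp.mul (continuousOn_id.rpow_const ?_)
  intro x hx; exact Or.inl (ne_of_gt hx)

open MeasureTheory in
lemma uig_integrableOn (s : ℝ) {a : ℝ} (ha : 0 < a) :
    IntegrableOn (fun t : ℝ => Real.exp (-t) * t ^ (s - 1)) (Ioi a) := by
  refine integrable_of_isBigO_exp_neg one_half_pos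
    ((uig_contOn s).mono fun t ht => lt_of_lt_of_le ha ht)
    (Real.Gamma_integrand_isLittleO _).isBigO

open MeasureTheory in
lemma uig_hasDerivAt (s : ℝ) {w : ℝ} (hw : 0 < w) :
    HasDerivAt (upperIncompleteGamma s) (-(Real.exp (-w) * w ^ (s - 1))) w := by
  set f : ℝ → ℝ := fun t => Real.exp (-t) * t ^ (s - 1) with hf
  have ha : 0 < w / 2 := by linarith
  have heq : ∀ u ∈ Ioi (w / 2), upperIncompleteGamma s u
      = upperIncompleteGamma s (w / 2) - ∫ t in (w / 2)..u, f t := by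
    intro u hu
    have hau : w / 2 ≤ u := le_of_lt hu
    rw [intervalIntegral.integral_of_le hau]
    have hsplit : Ioi (w / 2) = Ioc (w / 2) u ∪ Ioi u := (Ioc_union_Ioi_eq_Ioi hau).symm
    rw [upperIncompleteGamma, upperIncompleteGamma, hsplit,
      setIntegral_union (Ioc_disjoint_Ioi le_rfl) measurableSet_Ioi
        ((uig_integrableOn s ha).mono_set Ioc_subset_Ioi_self)
        (uig_integrableOn s (lt_of_lt_of_le ha hau))]
    ring
  have hint : IntervalIntegrable f volume (w / 2) w := by
    apply ContinuousOn.intervalIntegrable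
    apply (uig_contOn s).mono
    intro t ht
    rcases ht with ⟨h1, _⟩
    have h2 : w / 2 ≤ t := le_trans (by simp [min_eq_left (by linarith : w / 2 ≤ w)]) h1
    exact lt_of_lt_of_le ha h2
  have hmeas : StronglyMeasurableAtFilter f (𝓝 w) volume :=
    (uig_contOn s).stronglyMeasurableAtFilter isOpen_Ioi w hw
  have hc : ContinuousAt f w := (uig_contOn s).continuousAt (Ioi_mem_nhds hw)
  have hderiv : HasDerivAt (fun u => upperIncompleteGamma s (w / 2) - ∫ t in (w / 2)..u, f t)
      (-f w) w := by
    simpa using (intervalIntegral.integral_hasDerivAt_right hint hmeas hc).const_sub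
      (upperIncompleteGamma s (w / 2))
  exact hderiv.congr_of_eventuallyEq
    (Filter.eventuallyEq_of_mem (Ioi_mem_nhds (by linarith : w / 2 < w)) heq)

/-- For `F(z) = c Γ(1-κ, 4πny) e^{-2πinz}`, one has
`ξ_κ(F)(z) = -(4πn)^{1-κ} conj(c) e^{2πinz}` on the upper half-plane. -/
theorem xi_of_incomplete_gamma_term (κ : ℝ) (n : ℝ) (hn : 0 < n) (c : ℂ) :
    ∀ z : ℂ, 0 < z.im →
      xiOp κ
        (fun w => c * ((upperIncompleteGamma (1 - κ) (4 * π * n * w.im) : ℝ) : ℂ)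
          * Complex.exp (-2 * π * Complex.I * n * w)) z
      = -(((4 * π * n) ^ (1 - κ) : ℝ) : ℂ) * (starRingEnd ℂ) c
          * Complex.exp (2 * π * Complex.I * n * z) := by
  intro z hz
  have hπ := Real.pi_pos
  have ha : (0:ℝ) < 4 * π * n := by positivity
  have hay : (0:ℝ) < 4 * π * n * z.im := by positivity
  set G' : ℝ := -(Real.exp (-(4 * π * n * z.im)) * (4 * π * n * z.im) ^ (-κ)) with hG'def
  have hG : HasDerivAt (upperIncompleteGamma (1 - κ)) G' (4 * π * n * z.im) := by
    have h := uig_hasDerivAt (1 - κ) hay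
    have : (1 - κ) - 1 = -κ := by ring
    rwa [this] at h
  have h1 : HasFDerivAt (fun w : ℂ => 4 * π * n * w.im) ((4 * π * n : ℝ) • Complex.imCLM) z :=
    Complex.imCLM.hasFDerivAt.const_mul (4 * π * n)
  have h2 : HasFDerivAt (fun w : ℂ => upperIncompleteGamma (1 - κ) (4 * π * n * w.im))
      (G' • ((4 * π * n : ℝ) • Complex.imCLM)) z := by
    have := hG.comp_hasFDerivAt z h1; exact this
  have h3 : HasFDerivAt (fun w : ℂ => ((upperIncompleteGamma (1 - κ) (4 * π * n * w.im) : ℝ) : ℂ))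
      (Complex.ofRealCLM.comp (G' • ((4 * π * n : ℝ) • Complex.imCLM))) z :=
    Complex.ofRealCLM.hasFDerivAt.comp z h2
  have h4 : HasFDerivAt
      (fun w : ℂ => c * ((upperIncompleteGamma (1 - κ) (4 * π * n * w.im) : ℝ) : ℂ))
      (c • (Complex.ofRealCLM.comp (G' • ((4 * π * n : ℝ) • Complex.imCLM)))) z :=
    h3.const_mul c
  have h5 : HasDerivAt (fun w : ℂ => Complex.exp (-2 * π * Complex.I * n * w))
      (Complex.exp (-2 * π * Complex.I * n * z) * (-2 * π * Complex.I * n)) z := by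
    simpa using ((hasDerivAt_id z).const_mul (-2 * π * Complex.I * n)).cexp
  have h6 := (h5.hasFDerivAt.restrictScalars ℝ)
  have hF := h4.fun_mul h6
  have hw : wdzbar
      (fun w => c * ((upperIncompleteGamma (1 - κ) (4 * π * n * w.im) : ℝ) : ℂ)
        * Complex.exp (-2 * π * Complex.I * n * w)) z
      = Complex.I * ((4 * π * n : ℝ) : ℂ) * ((G' : ℝ) : ℂ) * c
          * Complex.exp (-2 * π * Complex.I * n * z) / 2 := by
    simp only [wdzbar, pdx, pdy, hF.fderiv]
    simp only [ContinuousLinearMap.add_apply, ContinuousLinearMap.coe_smul',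
      Pi.smul_apply, ContinuousLinearMap.coe_comp', Function.comp_apply,
      ContinuousLinearMap.coe_restrictScalars', ContinuousLinearMap.smulRight_apply,
      ContinuousLinearMap.toSpanSingleton_apply,
      ContinuousLinearMap.one_apply, Complex.imCLM_apply, Complex.ofRealCLM_apply,
      Complex.I_im, Complex.one_im, smul_eq_mul, Complex.real_smul]
    push_cast
    linear_combination (-(c * ((upperIncompleteGamma (1 - κ) (4 * π * n * z.im) : ℝ) : ℂ)
      * (π : ℂ) * Complex.I * (n : ℂ)
      * Complex.exp (-2 * π * Complex.I * n * z))) * Complex.I_sq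
  have hE : (starRingEnd ℂ) (Complex.exp (-2 * π * Complex.I * n * z))
      * ((Real.exp (-(4 * π * n * z.im)) : ℝ) : ℂ) = Complex.exp (2 * π * Complex.I * n * z) := by
    rw [← Complex.exp_conj, Complex.ofReal_exp, ← Complex.exp_add]
    congr 1
    have hc : (starRingEnd ℂ) z = z - 2 * (z.im : ℂ) * Complex.I := by
      have h := Complex.sub_conj z
      push_cast at h
      linear_combination -h
    simp only [map_mul, map_neg, map_ofNat, Complex.conj_ofReal, Complex.conj_I]
    rw [hc]
    push_cast
    linear_combination (-(4 * (π:ℂ) * n * z.im)) * Complex.I_sq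
  have hr : (4 * π * n) * (z.im ^ κ * (4 * π * n * z.im) ^ (-κ)) = (4 * π * n) ^ (1 - κ) := by
    rw [Real.mul_rpow ha.le hz.le]
    have hy1 : z.im ^ κ * z.im ^ (-κ) = 1 := by
      rw [← Real.rpow_add hz]; simp
    have ha1 : (4 * π * n) ^ (1 - κ) = (4 * π * n) * (4 * π * n) ^ (-κ) := by
      rw [show (1 - κ) = 1 + (-κ) by ring, Real.rpow_add ha, Real.rpow_one]
    rw [ha1]
    linear_combination (4 * π * n) * ((4 * π * n) ^ (-κ)) * hy1
  have hr' : ((4 * π * n : ℝ) : ℂ) * (((z.im ^ κ : ℝ) : ℂ) * (((4 * π * n * z.im) ^ (-κ) : ℝ) : ℂ))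
      = (((4 * π * n) ^ (1 - κ) : ℝ) : ℂ) := by
    rw [← Complex.ofReal_mul, ← Complex.ofReal_mul]
    exact Complex.ofReal_inj.mpr hr
  simp only [xiOp, hw, hG'def]
  rw [map_div₀, map_mul, map_mul, map_mul, map_mul, Complex.conj_I, Complex.conj_ofReal,
    Complex.conj_ofReal, map_ofNat]
  push_cast [Complex.ofReal_exp] at hE hr' ⊢
  linear_combination
    (((z.im ^ κ : ℝ) : ℂ) * (4 * (π:ℂ) * n) * Complex.exp (-(4 * π * n * z.im) : ℂ)
        * (((4 * π * n * z.im) ^ (-κ) : ℝ) : ℂ) * (starRingEnd ℂ) c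
        * (starRingEnd ℂ) (Complex.exp (-2 * π * Complex.I * n * z))) * Complex.I_sq
    + (-((((4 * π * n) ^ (1 - κ) : ℝ) : ℂ) * (starRingEnd ℂ) c)) * hE
    + (-((starRingEnd ℂ) c * (starRingEnd ℂ) (Complex.exp (-2 * π * Complex.I * n * z))
        * Complex.exp (-(4 * π * n * z.im) : ℂ))) * hr'
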